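/- arXiv:2102.01545 — 2 statements merged into one kernel-verified Lean document; each statement's English description precedes it below -/
import Mathlib

section
/- Fix a topological generator γ of Γ and let u, κ ∈ ⋂^r_Λ U_{K_∞,Σ,T} be norm-coherent sequences (with components u_n, κ_n at level n and bottom values u_0, κ_0) satisfying u = (γ−1)^e·κ. Then for every n ∈ ℕ one has 𝒩_n(u_n) = ν_n(κ_0 ⊗ (γ−1)^e), where 𝒩_n(a) = Σ_{σ∈Γ_n} σa ⊗ σ^{-1} is Darmon's twisted norm operator with values in (⋂^r_{Zp[𝒢]} U_{K,Σ,T}) ⊗_{Zp} Zp[Γ_n]/I(Γ_n)^{e+1}. In particular, Σ_{σ∈Γ_n} σu_n ⊗ σ^{-1} = (N_{Γ_n}κ_n) ⊗ (γ−1)^e in this module. -/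
/-!
STATEMENT 5 (Lemma 4.6, norm calculation).  Fix a topological generator `γ` of `Γ` and
let `u, κ ∈ ⋂^r_Λ U_{K_∞,Σ,T}` be norm-coherent sequences satisfying
`u = (γ−1)^e·κ`.  Then for every `n` one has `𝒩_n(u_n) = ν_n(κ_0 ⊗ (γ−1)^e)`; in
particular, writing everything at level `n`,
`Σ_{σ∈Γ_n} σu_n ⊗ σ⁻¹ = (N_{Γ_n} κ_n) ⊗ (γ−1)^e`
in `(⋂^r_{Z_p[𝒢_n]} U_{K_n,Σ,T}) ⊗_{Z_p} Z_p[Γ_n]/I(Γ_n)^{e+1}`.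

Formalisation.  We work at level `n`:  `G = 𝒢_n = Gal(K_n/k)` is a finite abelian
group, `H = Γ_n = Gal(K_n/K) ≤ 𝒢_n` is cyclic of order `p^n` generated by (the image
of the topological generator) `γ`, and `M` is the `Z_p[𝒢_n]`-module
`⋂^r_{Z_p[𝒢_n]} U_{K_n,Σ,T}`.  The augmentation ideal `I(Γ_n) ⊆ Z_p[Γ_n]` is the
kernel of the map sending every group element to `1`.  The elements
`u_n, κ_n ∈ M` of the norm-coherent sequences satisfy `u_n = (γ−1)^e κ_n` (the level-`n`
instance of `u = (γ−1)^e κ`), and the asserted identity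
`𝒩_n(u_n) = Σ_{σ∈Γ_n} σu_n ⊗ σ⁻¹ = (N_{Γ_n}κ_n) ⊗ (γ−1)^e = ν_n(κ_0 ⊗ (γ−1)^e)`
is stated in `M ⊗_{Z_p} Z_p[Γ_n]/I(Γ_n)^{e+1}` (recall that, by definition of `ν_n`,
`ν_n(κ_0 ⊗ x) = ν_n(N^r_{K_n/K}(κ_n) ⊗ x) = (N_{Γ_n}κ_n) ⊗ x`).
-/

open MonoidAlgebra TensorProduct

/-- The augmentation ideal `I(H) = ker(Z_p[H] → Z_p)`. -/
noncomputable def augIdeal (p : ℕ) [Fact p.Prime] (H : Type*) [CommGroup H] :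
    Ideal (MonoidAlgebra ℤ_[p] H) :=
  RingHom.ker ((MonoidAlgebra.lift ℤ_[p] ℤ_[p] H) 1).toRingHom

set_option maxHeartbeats 2000000 in
set_option synthInstance.maxHeartbeats 400000 in
/-- Key "twisting" computation: `Σ_σ σ(γ-1)^{e'} m ⊗ σ⁻¹c = Σ_σ σm ⊗ σ⁻¹(γ-1)^{e'}c`. -/
private lemma key_twist (p : ℕ) [Fact p.Prime] (G : Type) [CommGroup G]
    (H : Subgroup G) [Fintype H] (γ : H)
    (M : Type) [AddCommGroup M] [Module (MonoidAlgebra ℤ_[p] G) M]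
    [Module ℤ_[p] M] [IsScalarTower ℤ_[p] (MonoidAlgebra ℤ_[p] G) M]
    (J : Ideal (MonoidAlgebra ℤ_[p] H)) :
    ∀ e' : ℕ, ∀ (m : M) (c : MonoidAlgebra ℤ_[p] H),
      (∑ σ : H, ((of ℤ_[p] G (σ : G) * (of ℤ_[p] G (γ : G) - 1) ^ e') • m) ⊗ₜ[ℤ_[p]]
          (Ideal.Quotient.mk J (of ℤ_[p] H σ⁻¹ * c)))
      = ∑ σ : H, ((of ℤ_[p] G (σ : G)) • m) ⊗ₜ[ℤ_[p]]
          (Ideal.Quotient.mk J (of ℤ_[p] H σ⁻¹ * ((of ℤ_[p] H γ - 1) ^ e' * c))) := by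
  intro e'
  induction e' with
  | zero => intro m c; simp
  | succ d ih =>
    intro m c
    have expand : ∀ σ : H, of ℤ_[p] G (σ : G) * (of ℤ_[p] G (γ : G) - 1) ^ (d + 1)
        = of ℤ_[p] G (((σ * γ : H) : G)) * (of ℤ_[p] G (γ : G) - 1) ^ d
          - of ℤ_[p] G (σ : G) * (of ℤ_[p] G (γ : G) - 1) ^ d := by
      intro σ
      rw [Subgroup.coe_mul, map_mul]
      ring
    calc
      (∑ σ : H, ((of ℤ_[p] G (σ : G) * (of ℤ_[p] G (γ : G) - 1) ^ (d + 1)) • m) ⊗ₜ[ℤ_[p]]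
          (Ideal.Quotient.mk J (of ℤ_[p] H σ⁻¹ * c)))
          = ∑ σ : H,
            (((of ℤ_[p] G (((σ * γ : H) : G)) * (of ℤ_[p] G (γ : G) - 1) ^ d) • m) ⊗ₜ[ℤ_[p]]
              (Ideal.Quotient.mk J (of ℤ_[p] H σ⁻¹ * c))
            - ((of ℤ_[p] G (σ : G) * (of ℤ_[p] G (γ : G) - 1) ^ d) • m) ⊗ₜ[ℤ_[p]]
              (Ideal.Quotient.mk J (of ℤ_[p] H σ⁻¹ * c))) := by
        refine Finset.sum_congr rfl fun σ _ => ?_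
        rw [expand σ, sub_smul, TensorProduct.sub_tmul]
      _ = (∑ σ : H,
            ((of ℤ_[p] G (((σ * γ : H) : G)) * (of ℤ_[p] G (γ : G) - 1) ^ d) • m) ⊗ₜ[ℤ_[p]]
              (Ideal.Quotient.mk J (of ℤ_[p] H σ⁻¹ * c)))
          - (∑ σ : H,
            ((of ℤ_[p] G (σ : G) * (of ℤ_[p] G (γ : G) - 1) ^ d) • m) ⊗ₜ[ℤ_[p]]
              (Ideal.Quotient.mk J (of ℤ_[p] H σ⁻¹ * c))) :=
        Finset.sum_sub_distrib _ _
      _ = (∑ σ : H,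
            ((of ℤ_[p] G (σ : G) * (of ℤ_[p] G (γ : G) - 1) ^ d) • m) ⊗ₜ[ℤ_[p]]
              (Ideal.Quotient.mk J (of ℤ_[p] H σ⁻¹ * (of ℤ_[p] H γ * c))))
          - (∑ σ : H,
            ((of ℤ_[p] G (σ : G) * (of ℤ_[p] G (γ : G) - 1) ^ d) • m) ⊗ₜ[ℤ_[p]]
              (Ideal.Quotient.mk J (of ℤ_[p] H σ⁻¹ * c))) := by
        congr 1
        refine Fintype.sum_equiv (Equiv.mulRight γ) _ _ fun σ => ?_
        simp only [Equiv.coe_mulRight]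
        have hc : of ℤ_[p] H (σ * γ)⁻¹ * (of ℤ_[p] H γ * c)
            = of ℤ_[p] H σ⁻¹ * c := by
          rw [mul_inv_rev, map_mul, mul_mul_mul_comm, ← map_mul, inv_mul_cancel,
            map_one, one_mul]
        rw [hc]
      _ = (∑ σ : H, ((of ℤ_[p] G (σ : G)) • m) ⊗ₜ[ℤ_[p]]
            (Ideal.Quotient.mk J
              (of ℤ_[p] H σ⁻¹ * ((of ℤ_[p] H γ - 1) ^ d * (of ℤ_[p] H γ * c)))))
          - (∑ σ : H, ((of ℤ_[p] G (σ : G)) • m) ⊗ₜ[ℤ_[p]]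
            (Ideal.Quotient.mk J
              (of ℤ_[p] H σ⁻¹ * ((of ℤ_[p] H γ - 1) ^ d * c)))) := by
        rw [ih m (of ℤ_[p] H γ * c), ih m c]
      _ = ∑ σ : H, ((of ℤ_[p] G (σ : G)) • m) ⊗ₜ[ℤ_[p]]
            (Ideal.Quotient.mk J
              (of ℤ_[p] H σ⁻¹ * ((of ℤ_[p] H γ - 1) ^ (d + 1) * c))) := by
        rw [← Finset.sum_sub_distrib]
        refine Finset.sum_congr rfl fun σ _ => ?_
        rw [← TensorProduct.tmul_sub, ← map_sub]
        have hq : of ℤ_[p] H σ⁻¹ * ((of ℤ_[p] H γ - 1) ^ d * (of ℤ_[p] H γ * c))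
            - of ℤ_[p] H σ⁻¹ * ((of ℤ_[p] H γ - 1) ^ d * c)
            = of ℤ_[p] H σ⁻¹ * ((of ℤ_[p] H γ - 1) ^ (d + 1) * c) := by ring
        rw [hq]

set_option maxHeartbeats 2000000 in
set_option synthInstance.maxHeartbeats 400000 in
private lemma mem_augIdeal (p : ℕ) [Fact p.Prime] {G : Type} [CommGroup G]
    (H : Subgroup G) (τ : H) : of ℤ_[p] H τ - 1 ∈ augIdeal p H := by
  simp only [augIdeal, RingHom.mem_ker, AlgHom.toRingHom_eq_coe, RingHom.coe_coe]
  have h1 : ((MonoidAlgebra.lift ℤ_[p] ℤ_[p] ↥H) 1) (of ℤ_[p] ↥H τ) = 1 := by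
    rw [MonoidAlgebra.lift_of]; rfl
  have h2 : ((MonoidAlgebra.lift ℤ_[p] ℤ_[p] ↥H) 1) (1 : MonoidAlgebra ℤ_[p] ↥H) = 1 :=
    map_one ((MonoidAlgebra.lift ℤ_[p] ℤ_[p] ↥H) 1)
  rw [map_sub, h1, h2, sub_self]

set_option maxHeartbeats 2000000 in
set_option synthInstance.maxHeartbeats 400000 in
theorem stmt_5 (p : ℕ) [Fact p.Prime] (n e : ℕ)
    -- `G = 𝒢_n = Gal(K_n/k)`, finite abelian:
    (G : Type) [CommGroup G] [Fintype G]
    -- `H = Γ_n = Gal(K_n/K)`, of order `p^n`: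
    (H : Subgroup G) [Fintype H] (hH : Nat.card H = p ^ n)
    -- `γ` generates `Γ_n` (it is the image of a topological generator of `Γ`):
    (γ : H) (hγ : ∀ h : H, h ∈ Subgroup.zpowers γ)
    -- `M = ⋂^r_{Z_p[𝒢_n]} U_{K_n,Σ,T}`:
    (M : Type) [AddCommGroup M] [Module (MonoidAlgebra ℤ_[p] G) M]
    [Module ℤ_[p] M] [IsScalarTower ℤ_[p] (MonoidAlgebra ℤ_[p] G) M]
    -- the level-`n` components of the norm-coherent sequences `u = (γ−1)^e κ`:
    (u κ : M)
    (h : u = ((of ℤ_[p] G (γ : G) - 1) ^ e) • κ) :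
    -- `𝒩_n(u_n) = Σ_{σ∈Γ_n} σu_n ⊗ σ⁻¹  =  (N_{Γ_n}κ_n) ⊗ (γ−1)^e  (= ν_n(κ_0 ⊗ (γ−1)^e))`
    -- in `M ⊗_{Z_p} Z_p[Γ_n]/I(Γ_n)^{e+1}`:
    (∑ σ : H, (((of ℤ_[p] G (σ : G)) • u) ⊗ₜ[ℤ_[p]]
        (Ideal.Quotient.mk ((augIdeal p H) ^ (e + 1)) (of ℤ_[p] H σ⁻¹))))
      = ((∑ σ : H, of ℤ_[p] G (σ : G)) • κ) ⊗ₜ[ℤ_[p]]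
          (Ideal.Quotient.mk ((augIdeal p H) ^ (e + 1)) ((of ℤ_[p] H γ - 1) ^ e)) := by
  classical
  have step1 : (∑ σ : H, (((of ℤ_[p] G (σ : G)) • u) ⊗ₜ[ℤ_[p]]
        (Ideal.Quotient.mk ((augIdeal p H) ^ (e + 1)) (of ℤ_[p] H σ⁻¹))))
      = ∑ σ : H, ((of ℤ_[p] G (σ : G) * (of ℤ_[p] G (γ : G) - 1) ^ e) • κ) ⊗ₜ[ℤ_[p]]
          (Ideal.Quotient.mk ((augIdeal p H) ^ (e + 1)) (of ℤ_[p] H σ⁻¹ * 1)) := by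
    refine Finset.sum_congr rfl fun σ _ => ?_
    rw [h, smul_smul, mul_one]
  rw [step1, key_twist p G H γ M ((augIdeal p H) ^ (e + 1)) e κ 1]
  have step2 : ∀ σ : H,
      Ideal.Quotient.mk ((augIdeal p H) ^ (e + 1))
        (of ℤ_[p] H σ⁻¹ * ((of ℤ_[p] H γ - 1) ^ e * 1))
      = Ideal.Quotient.mk ((augIdeal p H) ^ (e + 1)) ((of ℤ_[p] H γ - 1) ^ e) := by
    intro σ
    refine Ideal.Quotient.eq.mpr ?_
    have hdiff : of ℤ_[p] H σ⁻¹ * ((of ℤ_[p] H γ - 1) ^ e * 1) - (of ℤ_[p] H γ - 1) ^ e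
        = (of ℤ_[p] H σ⁻¹ - 1) * (of ℤ_[p] H γ - 1) ^ e := by ring
    rw [hdiff, pow_succ']
    exact Ideal.mul_mem_mul (mem_augIdeal p H σ⁻¹)
      (Ideal.pow_mem_pow (mem_augIdeal p H γ) e)
  simp_rw [step2]
  rw [Finset.sum_smul, TensorProduct.sum_tmul]
end

section
/- Let N/ℚ be a normal extension of number fields and let x ∈ O_{N,S_p(N)} (an S_p-integer of N) be such that log_p(N_{N_𝔭/ℚ_p}(x)) = 0 for all 𝔭 ∈ S_p(N). Then the valuation ord_𝔭(x) is the same for all 𝔭 ∈ S_p(N). -/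
set_option maxHeartbeats 1000000
set_option synthInstance.maxHeartbeats 400000


/-!
STATEMENT 10.  Let `N/ℚ` be a normal extension of number fields and let
`x ∈ O_{N,S_p(N)}` be an `S_p`-integer of `N` such that
`log_p (N_{N_𝔭/ℚ_p}(x)) = 0` for all `𝔭 ∈ S_p(N)`.  Then the valuation `ord_𝔭(x)` is
the same for all `𝔭 ∈ S_p(N)`.

Formalisation notes.  Places of `N` are height-one primes of the ring of integers
`𝓞 N`, and `𝔭 ∈ S_p(N)` means `p ∈ 𝔭`.  That `x` is an `S_p(N)`-integer means
`ord_𝔭(x) ≥ 0`, i.e. `v.valuation x ≤ 1`, for all finite places `v ∉ S_p(N)`.  Since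
`N/ℚ` is normal, the local norm `N_{N_𝔭/ℚ_p}(x)` is the image in `N_𝔭` of
`∏_{σ ∈ D_𝔭} σ(x)`, where `D_𝔭 = {σ ∈ Gal(N/ℚ) : σ𝔭 = 𝔭}` is the decomposition
group at `𝔭` (characterised by preservation of the `𝔭`-adic valuation).  The kernel of
the Iwasawa logarithm `log_p` on `ℚ_p^×` consists exactly of the roots of unity times
integer powers of `p`; hence, as the element `∏_{σ ∈ D_𝔭} σ(x)` already lies in `N`,
the hypothesis `log_p(N_{N_𝔭/ℚ_p}(x)) = 0` is equivalent to the (here formalised)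
statement that some positive power of this element is an integer power of `p`.
-/

open IsDedekindDomain NumberField

section Aux

variable {N : Type*} [Field N] [NumberField N]

/-- Restriction of a Galois automorphism to the ring of integers, as a ring equivalence. -/
noncomputable def galRE (σ : N ≃ₐ[ℚ] N) : (𝓞 N) ≃+* (𝓞 N) :=
  (galRestrict ℤ ℚ N (𝓞 N) σ).toRingEquiv

lemma galRE_algebraMap (σ : N ≃ₐ[ℚ] N) (a : 𝓞 N) :
    algebraMap (𝓞 N) N (galRE σ a) = σ (algebraMap (𝓞 N) N a) :=
  algebraMap_galRestrict_apply ℤ σ a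

/-- The pullback of a height-one prime under a Galois automorphism. -/
noncomputable def hosMap (σ : N ≃ₐ[ℚ] N) (w : HeightOneSpectrum (𝓞 N)) :
    HeightOneSpectrum (𝓞 N) where
  asIdeal := Ideal.comap (galRE σ) w.asIdeal
  isPrime := Ideal.IsPrime.comap _
  ne_bot := by
    obtain ⟨y, hy, hy0⟩ := (Submodule.ne_bot_iff _).1 w.ne_bot
    refine (Submodule.ne_bot_iff _).2 ⟨(galRE σ).symm y, ?_, ?_⟩
    · show (galRE σ) ((galRE σ).symm y) ∈ w.asIdeal
      rwa [RingEquiv.apply_symm_apply]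
    · exact fun h => hy0 (by simpa using congrArg (galRE σ) h)

lemma hosMap_p_mem (p : ℕ) (σ : N ≃ₐ[ℚ] N) (w : HeightOneSpectrum (𝓞 N))
    (hw : (p : 𝓞 N) ∈ w.asIdeal) : (p : 𝓞 N) ∈ (hosMap σ w).asIdeal := by
  refine Ideal.mem_comap.2 ?_
  rw [map_natCast]
  exact hw

lemma ideal_comap_le_comap {R : Type*} [CommRing R] (e : R ≃+* R) {I J : Ideal R} :
    I.comap e ≤ J.comap e ↔ I ≤ J := by
  constructor
  · intro h y hy
    have h1 : e.symm y ∈ I.comap e := by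
      simp only [Ideal.mem_comap, RingEquiv.apply_symm_apply]; exact hy
    have h2 := h h1
    simp only [Ideal.mem_comap, RingEquiv.apply_symm_apply] at h2
    exact h2
  · exact fun h => Ideal.comap_mono h

lemma hosMap_pow_dvd_iff (σ : N ≃ₐ[ℚ] N) (w : HeightOneSpectrum (𝓞 N)) (n : ℕ) (a : 𝓞 N) :
    (hosMap σ w).asIdeal ^ n ∣ Ideal.span {a} ↔
      w.asIdeal ^ n ∣ Ideal.span {(galRE σ) a} := by
  have hspan : Ideal.comap (galRE σ)
      (Ideal.span {(galRE σ) a}) = Ideal.span {a} := by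
    rw [← Ideal.map_symm, Ideal.map_span, Set.image_singleton, RingEquiv.symm_apply_apply]
  have hpow : Ideal.comap (galRE σ) (w.asIdeal ^ n) =
      (hosMap σ w).asIdeal ^ n := by
    rw [← Ideal.map_symm, Ideal.map_pow, Ideal.map_symm]
    rfl
  rw [Ideal.dvd_iff_le, Ideal.dvd_iff_le, ← hspan, ← hpow, ideal_comap_le_comap]

lemma hosMap_intValuation (σ : N ≃ₐ[ℚ] N) (w : HeightOneSpectrum (𝓞 N)) (a : 𝓞 N) :
    (hosMap σ w).intValuationDef a = w.intValuationDef ((galRE σ) a) := by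
  by_cases ha : a = 0
  · subst ha
    rw [map_zero]
    simp
  · have hea : (galRE σ) a ≠ 0 := fun h => ha (by simpa using congrArg (galRE σ).symm h)
    apply le_antisymm
    · rw [w.intValuationDef_if_neg hea]
      refine (HeightOneSpectrum.intValuation_le_pow_iff_dvd _ _ _).2 ?_
      refine (hosMap_pow_dvd_iff σ w _ a).2 ?_
      exact (HeightOneSpectrum.intValuation_le_pow_iff_dvd _ _ _).1
        (le_of_eq (w.intValuationDef_if_neg hea))
    · rw [(hosMap σ w).intValuationDef_if_neg ha]
      refine (HeightOneSpectrum.intValuation_le_pow_iff_dvd _ _ _).2 ?_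
      refine (hosMap_pow_dvd_iff σ w _ a).1 ?_
      exact (HeightOneSpectrum.intValuation_le_pow_iff_dvd _ _ _).1
        (le_of_eq ((hosMap σ w).intValuationDef_if_neg ha))

lemma hosMap_valuation (σ : N ≃ₐ[ℚ] N) (w : HeightOneSpectrum (𝓞 N)) (y : N) :
    (hosMap σ w).valuation (K := N) y = w.valuation (K := N) (σ y) := by
  obtain ⟨a, b, hb, rfl⟩ := IsFractionRing.div_surjective (A := 𝓞 N) y
  have hσdiv : σ (algebraMap (𝓞 N) N a / algebraMap (𝓞 N) N b) =
      σ (algebraMap (𝓞 N) N a) / σ (algebraMap (𝓞 N) N b) := map_div₀ σ _ _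
  rw [hσdiv, Valuation.map_div, Valuation.map_div,
    HeightOneSpectrum.valuation_of_algebraMap, HeightOneSpectrum.valuation_of_algebraMap,
    ← galRE_algebraMap, ← galRE_algebraMap,
    HeightOneSpectrum.valuation_of_algebraMap, HeightOneSpectrum.valuation_of_algebraMap,
    HeightOneSpectrum.intValuation_apply, HeightOneSpectrum.intValuation_apply,
    HeightOneSpectrum.intValuation_apply, HeightOneSpectrum.intValuation_apply,
    hosMap_intValuation, hosMap_intValuation]

lemma exists_hosMap_eq (p : ℕ) [Fact p.Prime] [IsGalois ℚ N]
    (v w : HeightOneSpectrum (𝓞 N)) (hv : (p : 𝓞 N) ∈ v.asIdeal)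
    (hw : (p : 𝓞 N) ∈ w.asIdeal) :
    ∃ σ : N ≃ₐ[ℚ] N, hosMap σ w = v := by
  by_contra hcon
  push_neg at hcon
  have hne : ∀ σ : N ≃ₐ[ℚ] N,
      ¬ v.asIdeal ≤ Ideal.comap (galRE σ) w.asIdeal := by
    intro σ hle
    apply hcon σ
    apply HeightOneSpectrum.ext
    exact ((HeightOneSpectrum.isMaximal v).eq_of_le (Ideal.IsPrime.comap _).ne_top hle).symm
  have hsub : ¬ ((v.asIdeal : Set (𝓞 N)) ⊆
      ⋃ σ ∈ ((Finset.univ : Finset (N ≃ₐ[ℚ] N)) : Set (N ≃ₐ[ℚ] N)),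
        (Ideal.comap (galRE σ) w.asIdeal : Set (𝓞 N))) := by
    rw [Ideal.subset_union_prime 1 1 (fun σ _ _ _ => Ideal.IsPrime.comap _)]
    rintro ⟨σ, -, hle⟩
    exact hne σ hle
  obtain ⟨b, hbv, hb⟩ := Set.not_subset.1 hsub
  have hbσ : ∀ σ : N ≃ₐ[ℚ] N, (galRE σ) b ∉ w.asIdeal := by
    intro σ hmem
    exact hb (Set.mem_biUnion (Finset.mem_univ σ) (Ideal.mem_comap.2 hmem))
  obtain ⟨k, hk⟩ : ∃ k : ℤ,
      (∏ σ : N ≃ₐ[ℚ] N, galRestrict ℤ ℚ N (𝓞 N) σ b) = algebraMap ℤ (𝓞 N) k :=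
    ⟨_, prod_galRestrict_eq_norm ℤ ℚ N (𝓞 N) b⟩
  have hcv : (∏ σ : N ≃ₐ[ℚ] N, galRestrict ℤ ℚ N (𝓞 N) σ b) ∈ v.asIdeal := by
    have hdvd : galRestrict ℤ ℚ N (𝓞 N) 1 b ∣
        ∏ σ : N ≃ₐ[ℚ] N, galRestrict ℤ ℚ N (𝓞 N) σ b :=
      Finset.dvd_prod_of_mem _ (Finset.mem_univ 1)
    rw [map_one, AlgEquiv.one_apply] at hdvd
    obtain ⟨d, hd⟩ := hdvd
    rw [hd]
    exact Ideal.mul_mem_right _ _ hbv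
  have hkmem : k ∈ Ideal.comap (algebraMap ℤ (𝓞 N)) v.asIdeal :=
    Ideal.mem_comap.2 (hk ▸ hcv)
  have hmax : (Ideal.span {(p : ℤ)}).IsMaximal :=
    PrincipalIdealRing.isMaximal_of_irreducible
      (Nat.prime_iff_prime_int.1 (Fact.out : p.Prime)).irreducible
  have hspan : Ideal.span {(p : ℤ)} = Ideal.comap (algebraMap ℤ (𝓞 N)) v.asIdeal := by
    refine hmax.eq_of_le (Ideal.IsPrime.comap _).ne_top ?_
    rw [Ideal.span_singleton_le_iff_mem, Ideal.mem_comap, map_natCast]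
    exact hv
  have hpk : (p : ℤ) ∣ k := Ideal.mem_span_singleton.1 (hspan ▸ hkmem)
  obtain ⟨j, hj⟩ := hpk
  have hcw : (∏ σ : N ≃ₐ[ℚ] N, galRestrict ℤ ℚ N (𝓞 N) σ b) ∈ w.asIdeal := by
    rw [hk, hj, map_mul, map_natCast]
    exact Ideal.mul_mem_right _ _ hw
  haveI := w.isPrime
  obtain ⟨σ, -, hσ⟩ := Ideal.IsPrime.prod_mem_iff.1 hcw
  exact hbσ σ hσ

end Aux

open scoped Classical in
theorem stmt_10 (p : ℕ) [Fact p.Prime] (N : Type*) [Field N] [NumberField N]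
    [IsGalois ℚ N] (x : N)
    -- `x` is an `S_p(N)`-integer:
    (hx : ∀ v : HeightOneSpectrum (𝓞 N), (p : 𝓞 N) ∉ v.asIdeal →
      v.valuation (K := N) x ≤ 1)
    -- `log_p (N_{N_𝔭/ℚ_p}(x)) = 0` for all `𝔭 ∈ S_p(N)`:
    (hlog : ∀ v : HeightOneSpectrum (𝓞 N), (p : 𝓞 N) ∈ v.asIdeal →
      ∃ (n : ℕ) (m : ℤ), 0 < n ∧
        (∏ σ ∈ Finset.univ.filter
            (fun σ : N ≃ₐ[ℚ] N => ∀ y : N,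
              v.valuation (K := N) (σ y) = v.valuation (K := N) y),
          σ x) ^ (n : ℤ) = (p : N) ^ m) :
    -- `ord_𝔭(x)` is the same for all `𝔭 ∈ S_p(N)`:
    ∀ v w : HeightOneSpectrum (𝓞 N),
      (p : 𝓞 N) ∈ v.asIdeal → (p : 𝓞 N) ∈ w.asIdeal →
      v.valuation (K := N) x = w.valuation (K := N) x := by
  intro v w hv hw
  have hpprime : p.Prime := Fact.out
  have ppos : (p : 𝓞 N) ≠ 0 := Nat.cast_ne_zero.2 hpprime.ne_zero
  set S : Set (HeightOneSpectrum (𝓞 N)) := {u | (p : 𝓞 N) ∈ u.asIdeal} with hS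
  have hSfin : S.Finite := by
    refine (Ideal.finite_factors (I := Ideal.span {(p : 𝓞 N)}) ?_).subset ?_
    · rw [Ideal.zero_eq_bot, Ne, Ideal.span_singleton_eq_bot]
      exact ppos
    · exact fun u hu => Ideal.dvd_span_singleton.2 hu
  obtain ⟨v0, hv0, hmax0⟩ :=
    hSfin.exists_maximalFor (fun u => u.valuation (K := N) x) S ⟨v, hv⟩
  have hM : ∀ u : HeightOneSpectrum (𝓞 N), (p : 𝓞 N) ∈ u.asIdeal →
      u.valuation (K := N) x ≤ v0.valuation (K := N) x := by
    intro u hu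
    rcases le_or_gt (u.valuation (K := N) x) (v0.valuation (K := N) x) with h | h
    · exact h
    · exact (hmax0 (j := u) hu h.le).ge
  obtain ⟨n, m, hn, heq⟩ := hlog v0 hv0
  set D := Finset.univ.filter
    (fun σ : N ≃ₐ[ℚ] N => ∀ y : N,
      v0.valuation (K := N) (σ y) = v0.valuation (K := N) y) with hD
  have h1D : (1 : N ≃ₐ[ℚ] N) ∈ D := by
    simp [hD]
  have hpN : (p : N) ≠ 0 := Nat.cast_ne_zero.2 hpprime.ne_zero
  have hx0 : x ≠ 0 := by
    rintro rfl
    rw [Finset.prod_eq_zero h1D (by simp), zero_zpow _ (by exact_mod_cast hn.ne')] at heq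
    exact (zpow_ne_zero m hpN) heq.symm
  have hMne : v0.valuation (K := N) x ≠ 0 := (Valuation.ne_zero_iff _).2 hx0
  have key : ∀ u : HeightOneSpectrum (𝓞 N), (p : 𝓞 N) ∈ u.asIdeal →
      u.valuation (K := N) x = v0.valuation (K := N) x := by
    intro u hu
    have hep : v0.valuation (K := N) (p : N) = u.valuation (K := N) (p : N) := by
      obtain ⟨σ, hσ⟩ := exists_hosMap_eq p v0 u hv0 hu
      rw [← hσ, hosMap_valuation, map_natCast]
    have Hu : (∏ σ ∈ D, u.valuation (K := N) (σ x)) ^ (n : ℤ) =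
        (u.valuation (K := N) (p : N)) ^ m := by
      have h := congrArg (u.valuation (K := N)) heq
      rwa [map_zpow₀, map_zpow₀, map_prod] at h
    have Hv0 : ((v0.valuation (K := N) x) ^ D.card) ^ (n : ℤ) =
        (u.valuation (K := N) (p : N)) ^ m := by
      have h := congrArg (v0.valuation (K := N)) heq
      rw [map_zpow₀, map_zpow₀, map_prod, hep] at h
      rw [← h]
      congr 1
      have hprop : ∀ σ ∈ D, v0.valuation (K := N) (σ x) = v0.valuation (K := N) x := by
        intro σ hσ
        rw [hD, Finset.mem_filter] at hσ
        exact hσ.2 x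
      rw [Finset.prod_congr rfl hprop, Finset.prod_const]
    have hXY : (∏ σ ∈ D, u.valuation (K := N) (σ x)) =
        (v0.valuation (K := N) x) ^ D.card := by
      have h := Hu.trans Hv0.symm
      rw [zpow_natCast, zpow_natCast] at h
      exact (pow_left_inj₀ zero_le' zero_le' hn.ne').1 h
    have hbound : ∀ σ : N ≃ₐ[ℚ] N,
        u.valuation (K := N) (σ x) ≤ v0.valuation (K := N) x := by
      intro σ
      rw [← hosMap_valuation σ u x]
      exact hM _ (hosMap_p_mem p σ u hu)
    rw [← Finset.mul_prod_erase D _ h1D, AlgEquiv.one_apply] at hXY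
    have herase : (∏ σ ∈ D.erase 1, u.valuation (K := N) (σ x)) ≤
        (v0.valuation (K := N) x) ^ (D.card - 1) := by
      calc (∏ σ ∈ D.erase 1, u.valuation (K := N) (σ x))
          ≤ ∏ _σ ∈ D.erase 1, v0.valuation (K := N) x :=
            Finset.prod_le_prod' (fun σ _ => hbound σ)
        _ = (v0.valuation (K := N) x) ^ (D.card - 1) := by
            rw [Finset.prod_const, Finset.card_erase_of_mem h1D]
    have hcard : D.card - 1 + 1 = D.card :=
      Nat.succ_pred_eq_of_pos (Finset.card_pos.2 ⟨1, h1D⟩)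
    have hfin : (v0.valuation (K := N) x) ^ D.card ≤
        u.valuation (K := N) x * (v0.valuation (K := N) x) ^ (D.card - 1) := by
      rw [← hXY]
      exact mul_le_mul_right herase _
    have hpow : (v0.valuation (K := N) x) ^ D.card =
        v0.valuation (K := N) x * (v0.valuation (K := N) x) ^ (D.card - 1) := by
      rw [← pow_succ', hcard]
    rw [hpow] at hfin
    have hMpow : (0 : WithZero (Multiplicative ℤ)) <
        (v0.valuation (K := N) x) ^ (D.card - 1) :=
      zero_lt_iff.2 (pow_ne_zero _ hMne)
    have hle : v0.valuation (K := N) x ≤ u.valuation (K := N) x :=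
      (mul_le_mul_iff_of_pos_right hMpow).1 hfin
    exact le_antisymm (hM u hu) hle
  rw [key v hv, key w hw]
end
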